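/- Minimax identity for the upper natural extension (Appendix B, equation (B.1)): Let g_1, …, g_n be gambles whose family avoids sure loss, and let f be any gamble. Then Ē_D(f) = min { max_{ω ∈ Ω} ( f(ω) + Σ_{i=1}^{n} λ_i g_i(ω) ) : λ_1, …, λ_n ≥ 0 }; in particular the infimum defining Ē_D(f) is attained, i.e. there exist λ_1, …, λ_n ≥ 0 with max_{ω ∈ Ω} ( f(ω) + Σ_{i=1}^{n} λ_i g_i(ω) ) = Ē_D(f), and every choice of λ_1, …, λ_n ≥ 0 gives max_{ω ∈ Ω} ( f(ω) + Σ_{i=1}^{n} λ_i g_i(ω) ) ≥ Ē_D(f). -/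

import Mathlib

open Finset Topology

/-- The upper natural extension of a gamble `f` relative to the finite family
of gambles `g`. -/
noncomputable def upperExtD {Ω : Type*} [Fintype Ω] {n : ℕ}
    (g : Fin n → Ω → ℝ) (f : Ω → ℝ) : ℝ :=
  sInf {β : ℝ | ∃ lam : Fin n → ℝ, (∀ i, 0 ≤ lam i) ∧
    ∀ ω : Ω, ∑ i : Fin n, lam i * g i ω ≤ β - f ω}

/-- Step of conic Carathéodory: shrink the support using a linear relation. -/
lemma conic_step {E : Type*} [AddCommGroup E] [Module ℝ E]
    {ι : Type*} [Fintype ι] [DecidableEq ι] (v : ι → E) (c : ι → ℝ)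
    (hc : ∀ i, 0 ≤ c i) (d : ι → ℝ) (hd0 : ∑ i, d i • v i = 0)
    (hsupp : ∀ i, c i = 0 → d i = 0) (hpos : ∃ i, 0 < d i) :
    ∃ c' : ι → ℝ, (∀ i, 0 ≤ c' i) ∧ ∑ i, c' i • v i = ∑ i, c i • v i ∧
      (univ.filter fun i => c' i ≠ 0).card < (univ.filter fun i => c i ≠ 0).card := by
  classical
  obtain ⟨i₁, hi₁⟩ := hpos
  set s : Finset ι := univ.filter fun i => 0 < d i with hs
  have hsne : s.Nonempty := ⟨i₁, by simp [hs, hi₁]⟩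
  set t : ℝ := s.inf' hsne (fun i => c i / d i) with ht
  have ht0 : 0 ≤ t := by
    apply Finset.le_inf'
    intro i hi
    have hdi : 0 < d i := by simpa [hs] using hi
    exact div_nonneg (hc i) hdi.le
  set c' : ι → ℝ := fun i => c i - t * d i with hc'
  have hc'0 : ∀ i, 0 ≤ c' i := by
    intro i
    by_cases hdi : 0 < d i
    · have hmem : i ∈ s := by simp [hs, hdi]
      have h1 := Finset.inf'_le (fun i => c i / d i) hmem
      have h2 : t * d i ≤ c i := by
        rw [← le_div_iff₀ hdi]
        exact h1
      simp [hc', sub_nonneg, h2]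
    · push_neg at hdi
      have : t * d i ≤ 0 := mul_nonpos_of_nonneg_of_nonpos ht0 hdi
      simp only [hc']
      linarith [hc i]
  refine ⟨c', hc'0, ?_, ?_⟩
  · have h3 : ∑ i, (c i - t * d i) • v i = ∑ i, c i • v i - t • ∑ i, d i • v i := by
      rw [Finset.smul_sum, ← Finset.sum_sub_distrib]
      congr 1; funext i; rw [sub_smul, mul_smul]
    simp [hc', h3, hd0]
  · apply Finset.card_lt_card
    constructor
    · intro i hi
      simp only [mem_filter, mem_univ, true_and] at hi ⊢
      intro hci
      exact hi (by simp [hc', hci, hsupp i hci])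
    · intro hsub
      obtain ⟨i₀, hi₀s, hi₀⟩ := Finset.exists_mem_eq_inf' hsne (fun i => c i / d i)
      have hdi₀ : 0 < d i₀ := by simpa [hs] using hi₀s
      have hci₀ : c i₀ ≠ 0 := fun h => by
        have := hsupp i₀ h; rw [this] at hdi₀; exact lt_irrefl 0 hdi₀
      have hmm : i₀ ∈ univ.filter fun i => c' i ≠ 0 := hsub (by simp [hci₀])
      simp only [mem_filter, mem_univ, true_and] at hmm
      apply hmm
      show c i₀ - t * d i₀ = 0
      rw [ht, hi₀, div_mul_cancel₀ _ hdi₀.ne', sub_self]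

/-- Conic Carathéodory: every nonnegative combination can be rewritten with
linearly independent support. -/
lemma conicCaratheodory' {E : Type*} [AddCommGroup E] [Module ℝ E]
    {ι : Type*} [Fintype ι] [DecidableEq ι] (v : ι → E) (c : ι → ℝ)
    (hc : ∀ i, 0 ≤ c i) :
    ∃ c' : ι → ℝ, (∀ i, 0 ≤ c' i) ∧ ∑ i, c' i • v i = ∑ i, c i • v i ∧
      LinearIndependent ℝ (fun i : {i // c' i ≠ 0} => v i) := by
  classical
  obtain ⟨N, hN⟩ : ∃ N, (univ.filter fun i => c i ≠ 0).card ≤ N := ⟨_, le_rfl⟩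
  induction N generalizing c with
  | zero =>
    have hall : ∀ i, c i = 0 := by
      intro i
      by_contra h
      have h1 : i ∈ univ.filter fun i => c i ≠ 0 := by simp [h]
      have := Finset.card_pos.mpr ⟨i, h1⟩
      omega
    haveI : IsEmpty {i // c i ≠ 0} := ⟨fun ⟨i, hi⟩ => hi (hall i)⟩
    exact ⟨c, hc, rfl, linearIndependent_empty_type⟩
  | succ N ih =>
    by_cases hli : LinearIndependent ℝ (fun i : {i // c i ≠ 0} => v i)
    · exact ⟨c, hc, rfl, hli⟩
    · obtain ⟨gg, hg0, j, hgj⟩ := Fintype.not_linearIndependent_iff.mp hli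
      set d : ι → ℝ := fun i => if h : c i ≠ 0 then gg ⟨i, h⟩ else 0 with hd
      have hdsum : ∑ i, d i • v i = 0 := by
        have h1 : ∑ i ∈ univ.filter (fun i => c i ≠ 0), d i • v i = ∑ i, d i • v i := by
          apply Finset.sum_filter_of_ne
          intro i _ hne
          by_contra h
          exact hne (by simp [hd, h])
        have h2 : ∑ i ∈ univ.filter (fun i => c i ≠ 0), d i • v i
            = ∑ i : {i // c i ≠ 0}, d i.1 • v i.1 :=
          Finset.sum_subtype _ (by simp) _
        rw [← h1, h2, ← hg0]
        apply Finset.sum_congr rfl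
        intro i _
        simp [hd, i.2]
      have hdsupp : ∀ i, c i = 0 → d i = 0 := by
        intro i hci; simp [hd, hci]
      have main : ∃ c' : ι → ℝ, (∀ i, 0 ≤ c' i) ∧ ∑ i, c' i • v i = ∑ i, c i • v i ∧
          (univ.filter fun i => c' i ≠ 0).card < (univ.filter fun i => c i ≠ 0).card := by
        by_cases hex : ∃ i, 0 < d i
        · exact conic_step v c hc d hdsum hdsupp hex
        · have hnegsum : ∑ i, (fun i => -d i) i • v i = 0 := by
            have h4 : ∀ i ∈ univ, (fun i => -d i) i • v i = -(d i • v i) := fun i _ => by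
              simp [neg_smul]
            rw [Finset.sum_congr rfl h4, Finset.sum_neg_distrib, hdsum, neg_zero]
          apply conic_step v c hc (fun i => -d i) hnegsum
            (fun i hi => by simp [hdsupp i hi])
          push_neg at hex
          refine ⟨j, ?_⟩
          have hdj : d j.1 = gg j := by simp [hd, j.2]
          have h5 := hex j.1
          rw [hdj] at h5
          simp only [neg_pos]
          rw [hdj]
          exact lt_of_le_of_ne h5 hgj
      obtain ⟨c', h1, h2, h3⟩ := main
      obtain ⟨c'', h1', h2', h3'⟩ := ih c' h1 (by omega)
      exact ⟨c'', h1', h2'.trans h2, h3'⟩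

/-- A finitely generated convex cone in `Ω → ℝ` is closed. -/
lemma isClosed_conicHull {ι : Type*} [Fintype ι] {Ω : Type*} [Fintype Ω]
    (v : ι → (Ω → ℝ)) :
    IsClosed {x : Ω → ℝ | ∃ c : ι → ℝ, (∀ i, 0 ≤ c i) ∧ ∑ i, c i • v i = x} := by
  classical
  have hset : {x : Ω → ℝ | ∃ c : ι → ℝ, (∀ i, 0 ≤ c i) ∧ ∑ i, c i • v i = x}
      = ⋃ s ∈ {s : Finset ι | LinearIndependent ℝ (fun i : s => v i)},
        (fun c : s → ℝ => ∑ i : s, c i • v i.1) '' {c | ∀ i, 0 ≤ c i} := by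
    ext x
    simp only [Set.mem_setOf_eq, Set.mem_iUnion, Set.mem_image]
    constructor
    · rintro ⟨c, hc, hsum⟩
      obtain ⟨c', hc'0, hc'sum, hli⟩ := conicCaratheodory' v c hc
      set s : Finset ι := univ.filter fun i => c' i ≠ 0 with hs
      have he : ∀ i : s, c' i.1 ≠ 0 := fun i => (Finset.mem_filter.mp i.2).2
      refine ⟨s, ?_, fun i => c' i.1, fun i => hc'0 i.1, ?_⟩
      · let e : s → {i // c' i ≠ 0} := fun i => ⟨i.1, he i⟩
        have hinj : Function.Injective e := fun a b hab =>
          Subtype.ext (congrArg Subtype.val hab : (e a).1 = (e b).1)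
        exact hli.comp e hinj
      · show (∑ i : {x // x ∈ s}, c' i.1 • v i.1) = x
        rw [← hsum, ← hc'sum,
          ← Finset.sum_subtype s (fun i => Iff.rfl) (fun i => c' i • v i)]
        apply Finset.sum_subset (Finset.subset_univ _)
        intro i _ hi
        have : c' i = 0 := by
          by_contra h
          exact hi (Finset.mem_filter.mpr ⟨Finset.mem_univ _, h⟩)
        simp [this]
    · rintro ⟨s, hli, c, hc, hsum⟩
      refine ⟨fun i => if h : i ∈ s then c ⟨i, h⟩ else 0, ?_, ?_⟩
      · intro i
        by_cases h : i ∈ s <;> simp [h, hc]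
      · rw [← hsum]
        have h6 : ∀ i : {x // x ∈ s},
            c i • v i.1 = (if h : i.1 ∈ s then c ⟨i.1, h⟩ else 0) • v i.1 := by
          intro i; simp [i.2]
        rw [Finset.sum_congr rfl (fun i _ => h6 i),
          ← Finset.sum_subtype s (fun i => Iff.rfl)
            (fun j => (if h : j ∈ s then c ⟨j, h⟩ else 0) • v j)]
        exact (Finset.sum_subset (Finset.subset_univ s) (fun i _ hi => by simp [hi])).symm
  rw [hset]
  apply Set.Finite.isClosed_biUnion (Set.toFinite _)
  intro s hs
  have hker : LinearMap.ker (Fintype.linearCombination ℝ (fun i : s => v i.1)) = ⊥ := by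
    rw [LinearMap.ker_eq_bot']
    intro c hc
    rw [Fintype.linearCombination_apply] at hc
    exact funext (Fintype.linearIndependent_iff.mp hs c hc)
  have hemb : IsClosedEmbedding (Fintype.linearCombination ℝ (fun i : s => v i.1)) :=
    LinearMap.isClosedEmbedding_of_injective hker
  have hcl : IsClosed {c : s → ℝ | ∀ i, 0 ≤ c i} := by
    have h7 : {c : s → ℝ | ∀ i, 0 ≤ c i} = ⋂ i, {c : s → ℝ | 0 ≤ c i} := by
      ext c; simp
    rw [h7]
    exact isClosed_iInter fun i => isClosed_le continuous_const (continuous_apply i)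
  have himg := hemb.isClosedMap _ hcl
  have heq : (fun c : s → ℝ => ∑ i : s, c i • v i.1) '' {c | ∀ i, 0 ≤ c i}
      = (Fintype.linearCombination ℝ (fun i : s => v i.1)) '' {c | ∀ i, 0 ≤ c i} :=
    Set.image_congr fun c _ => (Fintype.linearCombination_apply ..).symm
  rw [heq]
  exact himg

/-- Minimax identity (Appendix B, eq. (B.1)): the infimum defining `Ē_D(f)` is
attained as a minimum of `max_ω (f(ω) + ∑ λᵢ gᵢ(ω))` over nonnegative `λ`. -/
theorem upperExtD_eq_min_max
    {Ω : Type*} [Fintype Ω] [Nonempty Ω] (n : ℕ) (g : Fin n → Ω → ℝ)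
    (hasl : ∀ lam : Fin n → ℝ, (∀ i, 0 ≤ lam i) →
      0 ≤ Finset.univ.sup' Finset.univ_nonempty
        (fun ω => ∑ i : Fin n, lam i * g i ω))
    (f : Ω → ℝ) :
    (∃ lam : Fin n → ℝ, (∀ i, 0 ≤ lam i) ∧
      Finset.univ.sup' Finset.univ_nonempty
        (fun ω => f ω + ∑ i : Fin n, lam i * g i ω) = upperExtD g f) ∧
    (∀ lam : Fin n → ℝ, (∀ i, 0 ≤ lam i) →
      upperExtD g f ≤ Finset.univ.sup' Finset.univ_nonempty
        (fun ω => f ω + ∑ i : Fin n, lam i * g i ω)) := by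
  classical
  set B : Set ℝ := {β : ℝ | ∃ lam : Fin n → ℝ, (∀ i, 0 ≤ lam i) ∧
    ∀ ω : Ω, ∑ i : Fin n, lam i * g i ω ≤ β - f ω} with hB
  have hBne : B.Nonempty := by
    refine ⟨Finset.univ.sup' Finset.univ_nonempty f, fun _ => 0, fun i => le_rfl, ?_⟩
    intro ω
    simp [sub_nonneg, Finset.le_sup' f (Finset.mem_univ ω)]
  have hBbdd : BddBelow B := by
    refine ⟨Finset.univ.inf' Finset.univ_nonempty f, ?_⟩
    rintro β ⟨lam, hlam, hβ⟩
    have h0 := hasl lam hlam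
    rw [Finset.le_sup'_iff] at h0
    obtain ⟨ω, _, hω⟩ := h0
    have h1 := hβ ω
    have h2 : f ω ≤ β := by linarith
    exact le_trans (Finset.inf'_le f (Finset.mem_univ ω)) h2
  have hUE : upperExtD g f = sInf B := rfl
  have hmemB : ∀ lam : Fin n → ℝ, (∀ i, 0 ≤ lam i) →
      (Finset.univ.sup' Finset.univ_nonempty
        (fun ω => f ω + ∑ i : Fin n, lam i * g i ω)) ∈ B := by
    intro lam hlam
    refine ⟨lam, hlam, fun ω => ?_⟩
    have := Finset.le_sup' (fun ω => f ω + ∑ i : Fin n, lam i * g i ω) (Finset.mem_univ ω)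
    linarith
  have part2 : ∀ lam : Fin n → ℝ, (∀ i, 0 ≤ lam i) →
      upperExtD g f ≤ Finset.univ.sup' Finset.univ_nonempty
        (fun ω => f ω + ∑ i : Fin n, lam i * g i ω) := by
    intro lam hlam
    rw [hUE]
    exact csInf_le hBbdd (hmemB lam hlam)
  set v : (Fin n ⊕ Ω) → (Ω → ℝ) := Sum.elim g (fun ω => Pi.single ω 1) with hv
  set S : Set (Ω → ℝ) := {x : Ω → ℝ | ∃ c : Fin n ⊕ Ω → ℝ,
    (∀ i, 0 ≤ c i) ∧ ∑ i, c i • v i = x} with hS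
  have hSclosed : IsClosed S := isClosed_conicHull v
  have htrans : ∀ β : ℝ, β ∈ B ↔ (fun ω => β - f ω) ∈ S := by
    intro β
    constructor
    · rintro ⟨lam, hlam, hβ⟩
      refine ⟨Sum.elim lam (fun ω => β - f ω - ∑ i : Fin n, lam i * g i ω), ?_, ?_⟩
      · rintro (i | ω)
        · exact hlam i
        · simpa using sub_nonneg.mpr (hβ ω)
      · funext ω'
        rw [Finset.sum_apply, Fintype.sum_sum_type]
        simp only [hv, Sum.elim_inl, Sum.elim_inr, Pi.smul_apply, smul_eq_mul]
        have hsingle : ∑ ω : Ω, (β - f ω - ∑ i : Fin n, lam i * g i ω) * (Pi.single ω (1:ℝ) : Ω → ℝ) ω'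
            = β - f ω' - ∑ i : Fin n, lam i * g i ω' := by
          rw [Finset.sum_eq_single ω']
          · simp
          · intro b _ hb
            rw [Pi.single_eq_of_ne (Ne.symm hb), mul_zero]
          · simp
        rw [hsingle]
        ring
    · rintro ⟨c, hc, hsum⟩
      refine ⟨fun i => c (Sum.inl i), fun i => hc _, fun ω => ?_⟩
      have heval := congrFun hsum ω
      rw [Finset.sum_apply, Fintype.sum_sum_type] at heval
      simp only [hv, Sum.elim_inl, Sum.elim_inr, Pi.smul_apply, smul_eq_mul] at heval
      have hnn : 0 ≤ ∑ ω' : Ω, c (Sum.inr ω') * (Pi.single ω' (1:ℝ) : Ω → ℝ) ω := by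
        apply Finset.sum_nonneg
        intro ω' _
        apply mul_nonneg (hc _)
        rcases eq_or_ne ω ω' with h | h
        · subst h
          simp
        · rw [Pi.single_eq_of_ne h]
      linarith
  set b : ℝ := sInf B with hb
  have hbmem : b ∈ B := by
    rw [htrans]
    have hseq : Filter.Tendsto (fun k : ℕ => (fun ω => (b + 1/((k:ℝ)+1)) - f ω))
        Filter.atTop (nhds (fun ω => b - f ω)) := by
      rw [tendsto_pi_nhds]
      intro ω
      have h1 : Filter.Tendsto (fun k : ℕ => b + 1/((k:ℝ)+1)) Filter.atTop (nhds b) := by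
        have h2 := tendsto_one_div_add_atTop_nhds_zero_nat (𝕜 := ℝ)
        have h3 := Filter.Tendsto.const_add b h2
        simpa using h3
      exact h1.sub tendsto_const_nhds
    apply hSclosed.mem_of_tendsto hseq
    rw [Filter.eventually_atTop]
    refine ⟨0, fun k _ => ?_⟩
    have hlt : ∃ β ∈ B, β < b + 1/((k:ℝ)+1) := by
      apply exists_lt_of_csInf_lt hBne
      rw [← hb]
      have : (0:ℝ) < 1/((k:ℝ)+1) := by positivity
      linarith
    obtain ⟨β, hβB, hβlt⟩ := hlt
    obtain ⟨lam, hlam, hβ⟩ := hβB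
    have : (b + 1/((k:ℝ)+1)) ∈ B := ⟨lam, hlam, fun ω => le_trans (hβ ω) (by linarith)⟩
    rw [htrans] at this
    exact this
  refine ⟨?_, part2⟩
  obtain ⟨lam, hlam, hbb⟩ := hbmem
  refine ⟨lam, hlam, le_antisymm ?_ ?_⟩
  · rw [hUE]
    apply Finset.sup'_le
    intro ω _
    have := hbb ω
    linarith
  · exact part2 lam hlam
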